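/- Let A be a unital associative algebra over a commutative ring containing the rationals, and let ⋆ be an associative unital formal deformation of A, i.e. an associative λ-bilinear product on A[[λ]] with a ⋆ b = ab + O(λ) and with the same unit. Let P₀ ∈ A satisfy P₀² = P₀ for the undeformed product. Then P₀ ⋆ P₀ − P₀ = O(λ), the star square root and its star inverse (1 + 4(P₀ ⋆ P₀ − P₀))^{−1/2} exist in A[[λ]] as the formal binomial series (associated to the analytic function (1+x)^{−1/2}) evaluated with ⋆, and the element P := 1/2 + (P₀ − 1/2) ⋆ (1 + 4(P₀ ⋆ P₀ − P₀))^{−1/2} satisfies P ⋆ P = P and P = P₀ + O(λ). -/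

import Mathlib

noncomputable section

/-- The `K[[λ]]`-module structure on `A[[λ]]` for a `K`-algebra `A`: scalars act by
the Cauchy product via the algebra map `K → A` extended to power series. -/
def psSmulK {K : Type*} [CommRing K] {A : Type*} [Ring A] [Algebra K A]
    (z : PowerSeries K) (f : PowerSeries A) : PowerSeries A :=
  PowerSeries.map (algebraMap K A) z * f

/-- Iterated `⋆`-powers `X^{⋆k}` with respect to a product `mult` on `A[[λ]]`. -/
def starPow {A : Type*} [Ring A]
    (mult : PowerSeries A → PowerSeries A → PowerSeries A)
    (X : PowerSeries A) : ℕ → PowerSeries A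
  | 0 => 1
  | k + 1 => mult X (starPow mult X k)

/-- The Taylor coefficients of the analytic function `(1+x)^{-1/2}`:
`bc k = binom(-1/2, k) = (Π_{j<k} (-1/2 - j)) / k!`. -/
def invSqrtCoeff (k : ℕ) : ℚ :=
  (∏ j ∈ Finset.range k, (-(1 : ℚ) / 2 - j)) / (k.factorial : ℚ)

/-! ### Auxiliary facts about the binomial series of `(1+x)^{-1/2}` -/

lemma smeval_descPochhammer_rat (r : ℚ) (n : ℕ) :
    (descPochhammer ℤ n).smeval r = ∏ j ∈ Finset.range n, (r - j) := by
  induction n with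
  | zero => simp [descPochhammer_zero, Polynomial.smeval_one]
  | succ n ih =>
    rw [descPochhammer_succ_right, Polynomial.smeval_mul, ih, Finset.prod_range_succ]
    congr 1
    simp [Polynomial.smeval_sub, Polynomial.smeval_X, Polynomial.smeval_natCast]

lemma ringChoose_eq_invSqrtCoeff (k : ℕ) :
    Ring.choose (-(1 : ℚ) / 2) k = invSqrtCoeff k := by
  have h := Ring.descPochhammer_eq_factorial_smul_choose (-(1 : ℚ) / 2) k
  rw [smeval_descPochhammer_rat] at h
  rw [nsmul_eq_mul] at h
  have hf : (k.factorial : ℚ) ≠ 0 := Nat.cast_ne_zero.mpr k.factorial_ne_zero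
  rw [invSqrtCoeff, eq_div_iff hf, h, mul_comm]

lemma ringChoose_neg_one (m : ℕ) : Ring.choose (-1 : ℚ) m = (-1 : ℚ) ^ m := by
  have h := Ring.descPochhammer_eq_factorial_smul_choose (-1 : ℚ) m
  rw [smeval_descPochhammer_rat] at h
  have hp : (∏ j ∈ Finset.range m, ((-1 : ℚ) - j)) = (-1) ^ m * m.factorial := by
    rw [← Finset.prod_range_add_one_eq_factorial]
    push_cast
    rw [Finset.pow_eq_prod_const, ← Finset.prod_mul_distrib]
    apply Finset.prod_congr rfl
    intro j _
    ring
  rw [hp, nsmul_eq_mul] at h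
  have hf : (m.factorial : ℚ) ≠ 0 := Nat.cast_ne_zero.mpr m.factorial_ne_zero
  rw [mul_comm ((-1 : ℚ) ^ m) _] at h
  exact (mul_left_cancel₀ hf h).symm

lemma vandermonde_invSqrt (m : ℕ) :
    ∑ ij ∈ Finset.HasAntidiagonal.antidiagonal m, invSqrtCoeff ij.1 * invSqrtCoeff ij.2 = (-1 : ℚ) ^ m := by
  have h := Ring.add_choose_eq (r := -(1:ℚ)/2) (s := -(1:ℚ)/2) m (Commute.all _ _)
  have h2 : (-(1:ℚ)/2) + (-(1:ℚ)/2) = -1 := by norm_num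
  rw [h2, ringChoose_neg_one] at h
  rw [h]
  apply Finset.sum_congr rfl
  intro ij _
  rw [ringChoose_eq_invSqrtCoeff, ringChoose_eq_invSqrtCoeff]

lemma invSqrt_series_mul_self :
    (PowerSeries.mk invSqrtCoeff) * (PowerSeries.mk invSqrtCoeff)
      = PowerSeries.mk (fun m => (-1 : ℚ) ^ m) := by
  ext m
  rw [PowerSeries.coeff_mul, PowerSeries.coeff_mk]
  simpa using vandermonde_invSqrt m

lemma invSqrt_series_sq_mul :
    (1 + PowerSeries.X) * ((PowerSeries.mk invSqrtCoeff) * (PowerSeries.mk invSqrtCoeff)) = 1 := by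
  rw [invSqrt_series_mul_self]
  ext m
  rw [add_mul, one_mul, map_add]
  cases m with
  | zero => simp
  | succ m =>
    rw [PowerSeries.coeff_succ_X_mul, PowerSeries.coeff_mk, PowerSeries.coeff_mk]
    simp [pow_succ]

/-- The truncated binomial polynomial identity:
`p_n^2 (1+X) = 1 + X^(n+1) q` for the degree-`n` truncation `p_n` of `(1+x)^{-1/2}`. -/
lemma poly_partial_identity (n : ℕ) :
    ∃ q : Polynomial ℚ,
      (∑ k ∈ Finset.range (n+1), Polynomial.monomial k (invSqrtCoeff k))
        * (∑ k ∈ Finset.range (n+1), Polynomial.monomial k (invSqrtCoeff k))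
        * (1 + Polynomial.X) = 1 + Polynomial.X ^ (n+1) * q := by
  set p : Polynomial ℚ := ∑ k ∈ Finset.range (n+1), Polynomial.monomial k (invSqrtCoeff k)
    with hpdef
  set s : PowerSeries ℚ := PowerSeries.mk invSqrtCoeff with hsdef
  have hps : (PowerSeries.X : PowerSeries ℚ)^(n+1) ∣ (s - (p : PowerSeries ℚ)) := by
    rw [PowerSeries.X_pow_dvd_iff]
    intro m hm
    rw [map_sub, hsdef, PowerSeries.coeff_mk, Polynomial.coeff_coe]
    have hc : p.coeff m = invSqrtCoeff m := by
      rw [hpdef, Polynomial.finset_sum_coeff]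
      simp only [Polynomial.coeff_monomial]
      rw [Finset.sum_ite_eq' (Finset.range (n+1)) m invSqrtCoeff]
      simp [Finset.mem_range, hm]
    rw [hc, sub_self]
  have hdvdP : (Polynomial.X : Polynomial ℚ)^(n+1) ∣ (p * p * (1 + Polynomial.X) - 1) := by
    rw [Polynomial.X_pow_dvd_iff]
    intro d hd
    have hcoe : ((p * p * (1 + Polynomial.X) - 1 : Polynomial ℚ) : PowerSeries ℚ)
        = (p : PowerSeries ℚ) * (p : PowerSeries ℚ) * (1 + PowerSeries.X) - 1 := by
      simp [Polynomial.coe_sub, Polynomial.coe_mul, Polynomial.coe_add, Polynomial.coe_one,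
        Polynomial.coe_X]
    have hs1 : (1 + PowerSeries.X) * (s * s) = 1 := invSqrt_series_sq_mul
    have hid : (p : PowerSeries ℚ) * (p : PowerSeries ℚ) * (1 + PowerSeries.X) - 1
        = ((p : PowerSeries ℚ) - s) * (((p : PowerSeries ℚ) + s) * (1 + PowerSeries.X)) := by
      linear_combination hs1
    have hdvd2 : (PowerSeries.X : PowerSeries ℚ)^(n+1)
        ∣ ((p : PowerSeries ℚ) * (p : PowerSeries ℚ) * (1 + PowerSeries.X) - 1) := by
      rw [hid]
      refine Dvd.dvd.mul_right ?_ _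
      rw [show (p : PowerSeries ℚ) - s = -(s - (p : PowerSeries ℚ)) by ring]
      exact dvd_neg.mpr hps
    have hz := PowerSeries.X_pow_dvd_iff.mp hdvd2 d hd
    rw [← hcoe, Polynomial.coeff_coe] at hz
    exact hz
  obtain ⟨q, hq⟩ := hdvdP
  exact ⟨q, by linear_combination hq⟩

/-! ### A wrapper type carrying the star product as a ring structure -/

structure StarAlg (A : Type*) where
  mk ::
  toPS : PowerSeries A

instance {A : Type*} [Ring A] : AddCommGroup (StarAlg A) :=
  Equiv.addCommGroup ⟨StarAlg.toPS, StarAlg.mk, fun _ => rfl, fun _ => rfl⟩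

lemma StarAlg.ext' {A : Type*} {x y : StarAlg A} (h : x.toPS = y.toPS) : x = y := by
  cases x; cases y; cases h; rfl

lemma psSmulK_C {K : Type*} [CommRing K] {A : Type*} [Ring A] [Algebra K A]
    (c : K) (f : PowerSeries A) :
    psSmulK (PowerSeries.C c) f = PowerSeries.C (algebraMap K A c) * f := by
  rw [psSmulK, PowerSeries.map_C]

lemma psSmulK_X_pow {K : Type*} [CommRing K] {A : Type*} [Ring A] [Algebra K A]
    (n : ℕ) (f : PowerSeries A) :
    psSmulK ((PowerSeries.X : PowerSeries K) ^ n) f = (PowerSeries.X : PowerSeries A) ^ n * f := by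
  rw [psSmulK, map_pow, PowerSeries.map_X]

/-- Let `A` be a unital associative algebra over a commutative ring
`K ⊇ ℚ` and `⋆` an associative unital `λ`-bilinear formal deformation of `A`.  If
`P₀ ∈ A` is an idempotent for the undeformed product, then `P₀ ⋆ P₀ − P₀ = O(λ)`,
the `⋆`-inverse `⋆`-square root `W = (1 + 4(P₀ ⋆ P₀ − P₀))^{-1/2}` exists (uniquely,
of the form `1 + O(λ)`) in `A[[λ]]` and is given by the formal binomial series
evaluated with `⋆`, and `P := 1/2 + (P₀ − 1/2) ⋆ W` satisfies `P ⋆ P = P` and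
`P = P₀ + O(λ)`. -/
theorem deformation_of_projections
    (K : Type*) [CommRing K] [Algebra ℚ K]
    (A : Type*) [Ring A] [Algebra K A]
    (mult : PowerSeries A → PowerSeries A → PowerSeries A)
    -- `⋆` is `λ`-bilinear
    (hadd_l : ∀ f g h : PowerSeries A, mult (f + g) h = mult f h + mult g h)
    (hadd_r : ∀ f g h : PowerSeries A, mult f (g + h) = mult f g + mult f h)
    (hsmul_l : ∀ (z : PowerSeries K) (f g : PowerSeries A),
      mult (psSmulK z f) g = psSmulK z (mult f g))
    (hsmul_r : ∀ (z : PowerSeries K) (f g : PowerSeries A),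
      mult f (psSmulK z g) = psSmulK z (mult f g))
    -- `⋆` is associative and unital with the same unit
    (hassoc : ∀ f g h : PowerSeries A, mult (mult f g) h = mult f (mult g h))
    (hone_l : ∀ f : PowerSeries A, mult 1 f = f)
    (hone_r : ∀ f : PowerSeries A, mult f 1 = f)
    -- `⋆` deforms the product of `A`: `a ⋆ b = ab + O(λ)`
    (hdeform : ∀ f g : PowerSeries A,
      PowerSeries.coeff 0 (mult f g)
        = PowerSeries.coeff 0 f * PowerSeries.coeff 0 g)
    -- `P₀` is an idempotent of the undeformed product
    (P₀ : A) (hidem : P₀ * P₀ = P₀) :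
    -- `P₀ ⋆ P₀ − P₀ = O(λ)`
    PowerSeries.coeff 0
        (mult (PowerSeries.C P₀) (PowerSeries.C P₀) - PowerSeries.C P₀) = 0 ∧
    -- the `⋆`-inverse `⋆`-square root `W = (1 + 4(P₀ ⋆ P₀ − P₀))^{-1/2}` exists, …
    ∃ W : PowerSeries A,
      (PowerSeries.coeff 0 W = 1 ∧
        mult (mult W W)
          (1 + 4 • (mult (PowerSeries.C P₀) (PowerSeries.C P₀)
            - PowerSeries.C P₀)) = 1) ∧
      -- … is unique of the form `1 + O(λ)`, …
      (∀ W' : PowerSeries A, PowerSeries.coeff 0 W' = 1 →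
        mult (mult W' W')
          (1 + 4 • (mult (PowerSeries.C P₀) (PowerSeries.C P₀)
            - PowerSeries.C P₀)) = 1 → W' = W) ∧
      -- … is given by the formal binomial series of `(1+x)^{-1/2}` evaluated with `⋆`,
      (∀ n : ℕ, PowerSeries.coeff n W
        = PowerSeries.coeff n (∑ k ∈ Finset.range (n + 1),
            psSmulK (PowerSeries.C (algebraMap ℚ K (invSqrtCoeff k)))
              (starPow mult
                (4 • (mult (PowerSeries.C P₀) (PowerSeries.C P₀)
                  - PowerSeries.C P₀)) k))) ∧
      -- and `P := 1/2 + (P₀ − 1/2) ⋆ W` is a `⋆`-idempotent with `P = P₀ + O(λ)`.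
      (mult
          (PowerSeries.C (algebraMap K A (algebraMap ℚ K (1 / 2)))
            + mult (PowerSeries.C P₀
                - PowerSeries.C (algebraMap K A (algebraMap ℚ K (1 / 2)))) W)
          (PowerSeries.C (algebraMap K A (algebraMap ℚ K (1 / 2)))
            + mult (PowerSeries.C P₀
                - PowerSeries.C (algebraMap K A (algebraMap ℚ K (1 / 2)))) W)
        = PowerSeries.C (algebraMap K A (algebraMap ℚ K (1 / 2)))
            + mult (PowerSeries.C P₀
                - PowerSeries.C (algebraMap K A (algebraMap ℚ K (1 / 2)))) W) ∧
      (PowerSeries.coeff 0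
          (PowerSeries.C (algebraMap K A (algebraMap ℚ K (1 / 2)))
            + mult (PowerSeries.C P₀
                - PowerSeries.C (algebraMap K A (algebraMap ℚ K (1 / 2)))) W)
        = P₀) := by
  classical
  set ρ : ℚ →+* A := (algebraMap K A).comp (algebraMap ℚ K) with hρ
  have hCmul_l : ∀ (q : ℚ) (g : PowerSeries A),
      mult (PowerSeries.C (ρ q)) g = PowerSeries.C (ρ q) * g := by
    intro q g
    have h1 : PowerSeries.C (ρ q)
        = psSmulK (PowerSeries.C (algebraMap ℚ K q)) (1 : PowerSeries A) := by
      rw [psSmulK_C, mul_one]; rfl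
    calc mult (PowerSeries.C (ρ q)) g
        = mult (psSmulK (PowerSeries.C (algebraMap ℚ K q)) (1 : PowerSeries A)) g := by
          rw [← h1]
      _ = psSmulK (PowerSeries.C (algebraMap ℚ K q)) (mult 1 g) := hsmul_l _ _ _
      _ = psSmulK (PowerSeries.C (algebraMap ℚ K q)) g := by rw [hone_l]
      _ = PowerSeries.C (ρ q) * g := by rw [psSmulK_C]; rfl
  have hCmul_r : ∀ (q : ℚ) (g : PowerSeries A),
      mult g (PowerSeries.C (ρ q)) = PowerSeries.C (ρ q) * g := by
    intro q g
    have h1 : PowerSeries.C (ρ q)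
        = psSmulK (PowerSeries.C (algebraMap ℚ K q)) (1 : PowerSeries A) := by
      rw [psSmulK_C, mul_one]; rfl
    calc mult g (PowerSeries.C (ρ q))
        = mult g (psSmulK (PowerSeries.C (algebraMap ℚ K q)) (1 : PowerSeries A)) := by
          rw [← h1]
      _ = psSmulK (PowerSeries.C (algebraMap ℚ K q)) (mult g 1) := hsmul_r _ _ _
      _ = psSmulK (PowerSeries.C (algebraMap ℚ K q)) g := by rw [hone_r]
      _ = PowerSeries.C (ρ q) * g := by rw [psSmulK_C]; rfl
  have hXmul_l : ∀ (n : ℕ) (f g : PowerSeries A),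
      mult ((PowerSeries.X : PowerSeries A) ^ n * f) g
        = (PowerSeries.X : PowerSeries A) ^ n * mult f g := by
    intro n f g
    rw [← psSmulK_X_pow (K := K), hsmul_l, psSmulK_X_pow]
  have hXmul_r : ∀ (n : ℕ) (f g : PowerSeries A),
      mult f ((PowerSeries.X : PowerSeries A) ^ n * g)
        = (PowerSeries.X : PowerSeries A) ^ n * mult f g := by
    intro n f g
    rw [← psSmulK_X_pow (K := K), hsmul_r, psSmulK_X_pow]
  have hdvd_l : ∀ (n : ℕ) (f g : PowerSeries A),
      (PowerSeries.X : PowerSeries A) ^ n ∣ f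
        → (PowerSeries.X : PowerSeries A) ^ n ∣ mult f g := by
    rintro n f g ⟨h, rfl⟩
    rw [hXmul_l]
    exact Dvd.intro _ rfl
  have hdvd_r : ∀ (n : ℕ) (f g : PowerSeries A),
      (PowerSeries.X : PowerSeries A) ^ n ∣ g
        → (PowerSeries.X : PowerSeries A) ^ n ∣ mult f g := by
    rintro n f g ⟨h, rfl⟩
    rw [hXmul_r]
    exact Dvd.intro _ rfl
  have hcoeff_l : ∀ (n : ℕ) (f g : PowerSeries A),
      (PowerSeries.X : PowerSeries A) ^ n ∣ f →
      PowerSeries.coeff n (mult f g)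
        = PowerSeries.coeff n f * PowerSeries.coeff 0 g := by
    rintro n f g ⟨h, rfl⟩
    rw [hXmul_l]
    have e0 : PowerSeries.coeff n ((PowerSeries.X : PowerSeries A) ^ n * mult h g)
        = PowerSeries.coeff 0 (mult h g) := by
      simpa using PowerSeries.coeff_X_pow_mul (mult h g) n 0
    have e1 : PowerSeries.coeff n ((PowerSeries.X : PowerSeries A) ^ n * h)
        = PowerSeries.coeff 0 h := by
      simpa using PowerSeries.coeff_X_pow_mul h n 0
    rw [e0, e1, hdeform]
  have hcoeff_r : ∀ (n : ℕ) (f g : PowerSeries A),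
      (PowerSeries.X : PowerSeries A) ^ n ∣ g →
      PowerSeries.coeff n (mult f g)
        = PowerSeries.coeff 0 f * PowerSeries.coeff n g := by
    rintro n f g ⟨h, rfl⟩
    rw [hXmul_r]
    have e0 : PowerSeries.coeff n ((PowerSeries.X : PowerSeries A) ^ n * mult f h)
        = PowerSeries.coeff 0 (mult f h) := by
      simpa using PowerSeries.coeff_X_pow_mul (mult f h) n 0
    have e1 : PowerSeries.coeff n ((PowerSeries.X : PowerSeries A) ^ n * h)
        = PowerSeries.coeff 0 h := by
      simpa using PowerSeries.coeff_X_pow_mul h n 0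
    rw [e0, e1, hdeform]
  have hidem0 : PowerSeries.coeff 0
      (mult (PowerSeries.C P₀) (PowerSeries.C P₀) - PowerSeries.C P₀) = 0 := by
    rw [map_sub, hdeform]
    simp [hidem]
  set D : PowerSeries A :=
    4 • (mult (PowerSeries.C P₀) (PowerSeries.C P₀) - PowerSeries.C P₀) with hDdef
  have hD0 : PowerSeries.coeff 0 D = 0 := by
    rw [hDdef, map_nsmul, hidem0, smul_zero]
  have hXdvdD : (PowerSeries.X : PowerSeries A) ∣ D := by
    rw [PowerSeries.X_dvd_iff, ← PowerSeries.coeff_zero_eq_constantCoeff_apply]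
    exact hD0
  set U : PowerSeries A := 1 + D with hUdef
  have hU0 : PowerSeries.coeff 0 U = 1 := by
    rw [hUdef, map_add, hD0, add_zero]
    simp
  -- the star ring structure on the wrapper type
  letI : Ring (StarAlg A) :=
    { (inferInstance : AddCommGroup (StarAlg A)) with
      mul := fun x y => ⟨mult x.toPS y.toPS⟩
      mul_assoc := fun a b c => congrArg StarAlg.mk (hassoc a.toPS b.toPS c.toPS)
      one := ⟨1⟩
      one_mul := fun a => congrArg StarAlg.mk (hone_l a.toPS)
      mul_one := fun a => congrArg StarAlg.mk (hone_r a.toPS)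
      left_distrib := fun a b c => congrArg StarAlg.mk (hadd_r a.toPS b.toPS c.toPS)
      right_distrib := fun a b c => congrArg StarAlg.mk (hadd_l a.toPS b.toPS c.toPS)
      zero_mul := fun a => congrArg StarAlg.mk (by
        have h := hadd_l 0 0 a.toPS
        rw [add_zero] at h
        exact left_eq_add.mp h)
      mul_zero := fun a => congrArg StarAlg.mk (by
        have h := hadd_r a.toPS 0 0
        rw [add_zero] at h
        exact left_eq_add.mp h) }
  letI : Algebra ℚ (StarAlg A) := RingHom.toAlgebra'
    { toFun := fun q => StarAlg.mk (PowerSeries.C (ρ q))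
      map_one' := StarAlg.ext' (by
        show PowerSeries.C (ρ 1) = (1 : PowerSeries A)
        rw [map_one, map_one])
      map_mul' := fun q r => StarAlg.ext' (by
        show PowerSeries.C (ρ (q * r))
          = mult (PowerSeries.C (ρ q)) (PowerSeries.C (ρ r))
        rw [hCmul_l, ← map_mul, ← map_mul])
      map_zero' := StarAlg.ext' (by
        show PowerSeries.C (ρ 0) = (0 : PowerSeries A)
        rw [map_zero, map_zero])
      map_add' := fun q r => StarAlg.ext' (by
        show PowerSeries.C (ρ (q + r)) = PowerSeries.C (ρ q) + PowerSeries.C (ρ r)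
        rw [map_add, map_add]) }
    (fun q x => StarAlg.ext' (by
      show mult (PowerSeries.C (ρ q)) x.toPS = mult x.toPS (PowerSeries.C (ρ q))
      rw [hCmul_l, hCmul_r]))
  have halg : ∀ q : ℚ, algebraMap ℚ (StarAlg A) q = StarAlg.mk (PowerSeries.C (ρ q)) :=
    fun _ => rfl
  have hpow : ∀ k : ℕ, ((StarAlg.mk D) ^ k).toPS = starPow mult D k := by
    intro k
    induction k with
    | zero => rfl
    | succ k ih =>
      rw [pow_succ']
      show mult D ((StarAlg.mk D ^ k).toPS) = starPow mult D (k + 1)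
      rw [ih]
      rfl
  have hXpowDvdPow : ∀ k : ℕ,
      (PowerSeries.X : PowerSeries A) ^ k ∣ ((StarAlg.mk D) ^ k).toPS := by
    intro k
    induction k with
    | zero =>
      rw [pow_zero]
      exact one_dvd _
    | succ k ih =>
      have e : ((StarAlg.mk D) ^ (k+1)).toPS = mult D ((StarAlg.mk D ^ k).toPS) := by
        rw [pow_succ']
        rfl
      rw [e]
      obtain ⟨c, hc⟩ := ih
      rw [hc, hXmul_r]
      have h1 : (PowerSeries.X : PowerSeries A) ∣ mult D c := by
        obtain ⟨d, hd⟩ := hXdvdD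
        have h2 := hXmul_l 1 d c
        rw [pow_one] at h2
        rw [hd, h2]
        exact Dvd.intro _ rfl
      obtain ⟨e2, he2⟩ := h1
      rw [he2, ← mul_assoc, ← pow_succ]
      exact Dvd.intro _ rfl
  
  set φ : Polynomial ℚ →ₐ[ℚ] StarAlg A := Polynomial.aeval (StarAlg.mk D) with hφdef
  have hmono : ∀ (k : ℕ) (c : ℚ), (φ (Polynomial.monomial k c)).toPS
      = psSmulK (PowerSeries.C (algebraMap ℚ K c)) (starPow mult D k) := by
    intro k c
    have h1 : φ (Polynomial.monomial k c)
        = algebraMap ℚ (StarAlg A) c * (StarAlg.mk D) ^ k := by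
      rw [hφdef]; exact Polynomial.aeval_monomial _
    rw [psSmulK_C, h1]
    show mult (PowerSeries.C (ρ c)) ((StarAlg.mk D ^ k).toPS) = _
    rw [hCmul_l, hpow]
    rfl
  set Ssum : ℕ → PowerSeries A := fun n => ∑ k ∈ Finset.range (n + 1),
      psSmulK (PowerSeries.C (algebraMap ℚ K (invSqrtCoeff k)))
        (starPow mult D k) with hSsumdef
  set pQ : ℕ → Polynomial ℚ := fun n => ∑ k ∈ Finset.range (n + 1),
      Polynomial.monomial k (invSqrtCoeff k) with hpQdef
  let toPSHom : StarAlg A →+ PowerSeries A := AddMonoidHom.mk' StarAlg.toPS (fun _ _ => rfl)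
  have hSeval : ∀ n, (φ (pQ n)).toPS = Ssum n := by
    intro n
    have h1 : φ (pQ n) = ∑ k ∈ Finset.range (n + 1), φ (Polynomial.monomial k (invSqrtCoeff k)) := by
      rw [hpQdef]
      exact map_sum φ _ _
    have h2 : (φ (pQ n)).toPS
        = ∑ k ∈ Finset.range (n + 1), (φ (Polynomial.monomial k (invSqrtCoeff k))).toPS := by
      rw [h1]
      exact map_sum toPSHom _ _
    rw [h2, hSsumdef]
    exact Finset.sum_congr rfl (fun k _ => hmono k _)
  have hSmk : ∀ n, φ (pQ n) = StarAlg.mk (Ssum n) := by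
    intro n
    exact StarAlg.ext' (hSeval n)
  set W : PowerSeries A := PowerSeries.mk (fun n => PowerSeries.coeff n (Ssum n)) with hWdef
  have hterm_dvd : ∀ k, (PowerSeries.X : PowerSeries A) ^ k
      ∣ psSmulK (PowerSeries.C (algebraMap ℚ K (invSqrtCoeff k))) (starPow mult D k) := by
    intro k
    rw [psSmulK_C, PowerSeries.X_pow_dvd_iff]
    intro m hm
    rw [PowerSeries.coeff_C_mul]
    have hd : (PowerSeries.X : PowerSeries A) ^ k ∣ starPow mult D k := by
      rw [← hpow]; exact hXpowDvdPow k
    rw [PowerSeries.X_pow_dvd_iff.mp hd m hm, mul_zero]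
  have hcoeff_Ssum : ∀ (m n : ℕ), m ≤ n →
      PowerSeries.coeff m (Ssum n) = PowerSeries.coeff m (Ssum m) := by
    intro m n
    induction n with
    | zero =>
      intro hmn
      have h0 : m = 0 := Nat.le_zero.mp hmn
      subst h0; rfl
    | succ n ih =>
      intro hmn
      rcases eq_or_lt_of_le hmn with h | h
      · subst h; rfl
      · have hmn' : m ≤ n := by omega
        have e : Ssum (n + 1) = Ssum n
            + psSmulK (PowerSeries.C (algebraMap ℚ K (invSqrtCoeff (n+1))))
              (starPow mult D (n+1)) := by
          rw [hSsumdef]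
          exact Finset.sum_range_succ _ _
        rw [e, map_add]
        have hz : PowerSeries.coeff m
            (psSmulK (PowerSeries.C (algebraMap ℚ K (invSqrtCoeff (n+1))))
              (starPow mult D (n+1))) = 0 :=
          PowerSeries.X_pow_dvd_iff.mp (hterm_dvd (n+1)) m (by omega)
        rw [hz, add_zero]
        exact ih hmn'
  have hWcoeff : ∀ (m n : ℕ), m ≤ n →
      PowerSeries.coeff m W = PowerSeries.coeff m (Ssum n) := by
    intro m n hmn
    rw [hWdef, PowerSeries.coeff_mk]
    exact (hcoeff_Ssum m n hmn).symm
  have hWS : ∀ n, (PowerSeries.X : PowerSeries A) ^ (n+1) ∣ (W - Ssum n) := by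
    intro n
    rw [PowerSeries.X_pow_dvd_iff]
    intro m hm
    rw [map_sub, hWcoeff m n (by omega), sub_self]
  have hUeval : φ (1 + Polynomial.X) = StarAlg.mk U := by
    rw [map_add, map_one, hφdef, Polynomial.aeval_X]
    exact StarAlg.ext' rfl
  have hSSU : ∀ n, ∃ r : PowerSeries A, (PowerSeries.X : PowerSeries A) ^ (n+1) ∣ r ∧
      (StarAlg.mk (Ssum n) * StarAlg.mk (Ssum n) * StarAlg.mk U : StarAlg A)
        = 1 + StarAlg.mk r := by
    intro n
    obtain ⟨q, hq⟩ := poly_partial_identity n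
    refine ⟨((StarAlg.mk D) ^ (n+1) * φ q).toPS, ?_, ?_⟩
    · exact hdvd_l _ _ _ (hXpowDvdPow (n+1))
    · have hq' : pQ n * pQ n * (1 + Polynomial.X) = 1 + Polynomial.X ^ (n+1) * q := by
        rw [hpQdef]; exact hq
      have h2 := congrArg φ hq'
      have hX : φ Polynomial.X = StarAlg.mk D := by
        rw [hφdef]; exact Polynomial.aeval_X _
      rw [map_mul φ (pQ n * pQ n) (1 + Polynomial.X), map_mul φ (pQ n) (pQ n),
        map_add φ 1 (Polynomial.X ^ (n+1) * q), map_one,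
        map_mul φ (Polynomial.X ^ (n+1)) q, map_pow, hSmk n, hUeval, hX] at h2
      exact h2
  have hWWU : mult (mult W W) U = 1 := by
    ext n
    obtain ⟨r, hrdvd, hr⟩ := hSSU n
    have hr' : mult (mult (Ssum n) (Ssum n)) U = 1 + r := congrArg StarAlg.toPS hr
    have e : (StarAlg.mk W * StarAlg.mk W * StarAlg.mk U : StarAlg A)
        - StarAlg.mk (Ssum n) * StarAlg.mk (Ssum n) * StarAlg.mk U
        = ((StarAlg.mk W - StarAlg.mk (Ssum n)) * StarAlg.mk W
          + StarAlg.mk (Ssum n) * (StarAlg.mk W - StarAlg.mk (Ssum n))) * StarAlg.mk U := by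
      noncomm_ring
    have e' : mult (mult W W) U - mult (mult (Ssum n) (Ssum n)) U
        = mult (mult (W - Ssum n) W + mult (Ssum n) (W - Ssum n)) U :=
      congrArg StarAlg.toPS e
    have hdiff : (PowerSeries.X : PowerSeries A) ^ (n+1)
        ∣ (mult (mult W W) U - mult (mult (Ssum n) (Ssum n)) U) := by
      rw [e']
      exact hdvd_l _ _ _ (dvd_add (hdvd_l _ _ _ (hWS n)) (hdvd_r _ _ _ (hWS n)))
    have hc : PowerSeries.coeff n (mult (mult W W) U)
        = PowerSeries.coeff n (mult (mult (Ssum n) (Ssum n)) U) := by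
      have h0 := PowerSeries.X_pow_dvd_iff.mp hdiff n (Nat.lt_succ_self n)
      rw [map_sub, sub_eq_zero] at h0
      exact h0
    rw [hc, hr', map_add, PowerSeries.X_pow_dvd_iff.mp hrdvd n (Nat.lt_succ_self n), add_zero]
  have hW0 : PowerSeries.coeff 0 W = 1 := by
    have h1 : PowerSeries.coeff 0 W = PowerSeries.coeff 0 (Ssum 0) := hWcoeff 0 0 le_rfl
    have h2 : Ssum 0 = psSmulK (PowerSeries.C (algebraMap ℚ K (invSqrtCoeff 0)))
        (starPow mult D 0) := by
      rw [hSsumdef]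
      exact Finset.sum_range_one _
    have h3 : invSqrtCoeff 0 = 1 := by simp [invSqrtCoeff]
    rw [h1, h2, h3, psSmulK_C, map_one, map_one, map_one, one_mul]
    show PowerSeries.coeff 0 (1 : PowerSeries A) = 1
    simp
  have half_cancel : ∀ x : A, x + x = 0 → x = 0 := by
    intro x hx
    have h2 : ρ (1/2) * (x + x) = x := by
      rw [mul_add, ← add_mul, ← map_add, show (1/2 + 1/2 : ℚ) = 1 by norm_num, map_one, one_mul]
    rw [hx, mul_zero] at h2
    exact h2.symm
  have huniq : ∀ W' : PowerSeries A, PowerSeries.coeff 0 W' = 1 →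
      mult (mult W' W') U = 1 → W' = W := by
    intro W' h0' hWWU'
    have key : ∀ n, PowerSeries.coeff n (W' - W) = 0 := by
      intro n
      induction n using Nat.strong_induction_on with
      | _ n ih =>
      have hdvdΔ : (PowerSeries.X : PowerSeries A) ^ n ∣ (W' - W) :=
        PowerSeries.X_pow_dvd_iff.mpr (fun m hm => ih m hm)
      have e : (StarAlg.mk W' * StarAlg.mk W' * StarAlg.mk U : StarAlg A)
          - StarAlg.mk W * StarAlg.mk W * StarAlg.mk U
          = (StarAlg.mk W' - StarAlg.mk W) * (StarAlg.mk W' * StarAlg.mk U)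
            + StarAlg.mk W * ((StarAlg.mk W' - StarAlg.mk W) * StarAlg.mk U) := by
        noncomm_ring
      have e' : mult (mult W' W') U - mult (mult W W) U
          = mult (W' - W) (mult W' U) + mult W (mult (W' - W) U) :=
        congrArg StarAlg.toPS e
      rw [hWWU', hWWU, sub_self] at e'
      have c1 : PowerSeries.coeff n (mult (W' - W) (mult W' U))
          = PowerSeries.coeff n (W' - W) := by
        rw [hcoeff_l n _ _ hdvdΔ, hdeform, h0', hU0, one_mul, mul_one]
      have c2 : PowerSeries.coeff n (mult W (mult (W' - W) U))
          = PowerSeries.coeff n (W' - W) := by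
        rw [hcoeff_r n _ _ (hdvd_l n _ _ hdvdΔ), hW0, one_mul, hcoeff_l n _ _ hdvdΔ, hU0,
          mul_one]
      have hsum := congrArg (PowerSeries.coeff n) e'.symm
      rw [map_add, c1, c2, map_zero] at hsum
      exact half_cancel _ hsum
    ext m
    have h := key m
    rw [map_sub, sub_eq_zero] at h
    exact h
  
  have hcommW : ∀ Z : StarAlg A, (∀ n, Commute Z (φ (pQ n))) →
      Z * StarAlg.mk W = StarAlg.mk W * Z := by
    intro Z hZ
    have key : ∀ n, PowerSeries.coeff n ((Z * StarAlg.mk W - StarAlg.mk W * Z).toPS) = 0 := by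
      intro n
      have e : Z * StarAlg.mk W - StarAlg.mk W * Z
          = Z * (StarAlg.mk W - StarAlg.mk (Ssum n)) - (StarAlg.mk W - StarAlg.mk (Ssum n)) * Z
            + (Z * StarAlg.mk (Ssum n) - StarAlg.mk (Ssum n) * Z) := by
        noncomm_ring
      have hc : Z * StarAlg.mk (Ssum n) - StarAlg.mk (Ssum n) * Z = 0 := by
        rw [← hSmk n]
        exact sub_eq_zero.mpr (hZ n)
      rw [hc, add_zero] at e
      have e' : (Z * StarAlg.mk W - StarAlg.mk W * Z).toPS
          = mult Z.toPS (W - Ssum n) - mult (W - Ssum n) Z.toPS :=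
        congrArg StarAlg.toPS e
      have hdvd2 : (PowerSeries.X : PowerSeries A) ^ (n+1)
          ∣ (Z * StarAlg.mk W - StarAlg.mk W * Z).toPS := by
        rw [e']
        exact dvd_sub (hdvd_r _ _ _ (hWS n)) (hdvd_l _ _ _ (hWS n))
      exact PowerSeries.X_pow_dvd_iff.mp hdvd2 n (Nat.lt_succ_self n)
    have hzero : (Z * StarAlg.mk W - StarAlg.mk W * Z).toPS = 0 := by
      ext n
      rw [map_zero]
      exact key n
    have hz2 : Z * StarAlg.mk W - StarAlg.mk W * Z = 0 := StarAlg.ext' hzero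
    exact sub_eq_zero.mp hz2
  set q2 : PowerSeries A := PowerSeries.C (algebraMap K A (algebraMap ℚ K (1 / 2)))
    with hq2def
  set Q : PowerSeries A := PowerSeries.C P₀ - q2 with hQdef
  have hq2alg : algebraMap ℚ (StarAlg A) (1/2) = StarAlg.mk q2 := rfl
  have hQmk : StarAlg.mk Q
      = StarAlg.mk (PowerSeries.C P₀) - StarAlg.mk q2 := StarAlg.ext' rfl
  have hq2l : ∀ x : StarAlg A, StarAlg.mk q2 * x = (1/2 : ℚ) • x := fun x => by
    rw [← hq2alg, ← Algebra.smul_def]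
  have hq2r : ∀ x : StarAlg A, x * StarAlg.mk q2 = (1/2 : ℚ) • x := fun x => by
    rw [← hq2alg, ← Algebra.commutes, ← Algebra.smul_def]
  have hq21 : StarAlg.mk q2 = (1/2 : ℚ) • (1 : StarAlg A) := by
    rw [← hq2alg, Algebra.algebraMap_eq_smul_one]
  have hDmk : StarAlg.mk D = 4 • (StarAlg.mk (PowerSeries.C P₀)
      * StarAlg.mk (PowerSeries.C P₀) - StarAlg.mk (PowerSeries.C P₀)) := StarAlg.ext' rfl
  have hUmk : StarAlg.mk U = 1 + StarAlg.mk D := StarAlg.ext' rfl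
  have hQQU : StarAlg.mk U = 4 • (StarAlg.mk Q * StarAlg.mk Q) := by
    have h1 : StarAlg.mk Q * StarAlg.mk Q
        = StarAlg.mk (PowerSeries.C P₀) * StarAlg.mk (PowerSeries.C P₀)
          - StarAlg.mk (PowerSeries.C P₀) + (1/4 : ℚ) • (1 : StarAlg A) := by
      have e : StarAlg.mk Q * StarAlg.mk Q
          = StarAlg.mk (PowerSeries.C P₀) * StarAlg.mk (PowerSeries.C P₀)
            - StarAlg.mk q2 * StarAlg.mk (PowerSeries.C P₀)
            - StarAlg.mk (PowerSeries.C P₀) * StarAlg.mk q2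
            + StarAlg.mk q2 * StarAlg.mk q2 := by
        rw [hQmk]; noncomm_ring
      rw [e, hq2l (StarAlg.mk (PowerSeries.C P₀)), hq2r (StarAlg.mk (PowerSeries.C P₀)),
        hq2l (StarAlg.mk q2), hq21]
      module
    rw [hUmk, hDmk, h1]
    rw [← Nat.cast_smul_eq_nsmul ℚ 4, ← Nat.cast_smul_eq_nsmul ℚ 4]
    push_cast
    module
  have hQD : Commute (StarAlg.mk Q) (StarAlg.mk D) := by
    have h4 : ((4 : ℕ) : StarAlg A) = (4 : StarAlg A) := by norm_num
    have hD' : StarAlg.mk D = (4 : StarAlg A) * (StarAlg.mk Q * StarAlg.mk Q) - 1 := by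
      calc StarAlg.mk D = (1 + StarAlg.mk D) - 1 := by abel
        _ = 4 • (StarAlg.mk Q * StarAlg.mk Q) - 1 := by rw [← hUmk, hQQU]
        _ = ((4 : ℕ) : StarAlg A) * (StarAlg.mk Q * StarAlg.mk Q) - 1 := by
            rw [nsmul_eq_mul]
        _ = (4 : StarAlg A) * (StarAlg.mk Q * StarAlg.mk Q) - 1 := by rw [h4]
    rw [hD']
    refine Commute.sub_right (Commute.mul_right ?_ ?_) (Commute.one_right _)
    · exact (Nat.cast_commute 4 _).symm
    · exact (Commute.refl _).mul_right (Commute.refl _)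
  have hQφ : ∀ pl : Polynomial ℚ, Commute (StarAlg.mk Q) (φ pl) := by
    intro pl
    induction pl using Polynomial.induction_on' with
    | add p q hp hq => rw [map_add]; exact hp.add_right hq
    | monomial k c =>
      have h1 : φ (Polynomial.monomial k c)
          = algebraMap ℚ (StarAlg A) c * (StarAlg.mk D) ^ k := by
        rw [hφdef]; exact Polynomial.aeval_monomial _
      rw [h1]
      exact Commute.mul_right (Algebra.commutes c (StarAlg.mk Q)).symm (hQD.pow_right k)
  have hDφ : ∀ pl : Polynomial ℚ, Commute (StarAlg.mk D) (φ pl) := by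
    intro pl
    have h := (Commute.all Polynomial.X pl).map φ
    have hX : φ Polynomial.X = StarAlg.mk D := by
      rw [hφdef]; exact Polynomial.aeval_X _
    rwa [hX] at h
  have hQW : StarAlg.mk Q * StarAlg.mk W = StarAlg.mk W * StarAlg.mk Q :=
    hcommW _ (fun n => hQφ (pQ n))
  have hDWc : StarAlg.mk D * StarAlg.mk W = StarAlg.mk W * StarAlg.mk D :=
    hcommW _ (fun n => hDφ (pQ n))
  have hUW : StarAlg.mk U * StarAlg.mk W = StarAlg.mk W * StarAlg.mk U := by
    rw [hUmk, add_mul, mul_add, one_mul, mul_one, hDWc]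
  have hWWUs : StarAlg.mk W * StarAlg.mk W * StarAlg.mk U = 1 := by
    apply StarAlg.ext'
    exact hWWU
  have hUWW : StarAlg.mk U * (StarAlg.mk W * StarAlg.mk W) = 1 := by
    rw [← mul_assoc, hUW, mul_assoc, hUW, ← mul_assoc, hWWUs]
  have hQQs : StarAlg.mk Q * StarAlg.mk Q = (1/4 : ℚ) • StarAlg.mk U := by
    rw [hQQU, ← Nat.cast_smul_eq_nsmul ℚ 4, smul_smul]
    norm_num
  have hQWQW : (StarAlg.mk Q * StarAlg.mk W) * (StarAlg.mk Q * StarAlg.mk W)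
      = (1/4 : ℚ) • (1 : StarAlg A) := by
    have e1 : (StarAlg.mk Q * StarAlg.mk W) * (StarAlg.mk Q * StarAlg.mk W)
        = StarAlg.mk Q * ((StarAlg.mk W * StarAlg.mk Q) * StarAlg.mk W) := by noncomm_ring
    rw [e1, ← hQW]
    have e2 : StarAlg.mk Q * ((StarAlg.mk Q * StarAlg.mk W) * StarAlg.mk W)
        = (StarAlg.mk Q * StarAlg.mk Q) * (StarAlg.mk W * StarAlg.mk W) := by noncomm_ring
    rw [e2, hQQs, smul_mul_assoc, hUWW]
  have hPP : (StarAlg.mk q2 + StarAlg.mk Q * StarAlg.mk W)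
      * (StarAlg.mk q2 + StarAlg.mk Q * StarAlg.mk W)
      = StarAlg.mk q2 + StarAlg.mk Q * StarAlg.mk W := by
    have expand : (StarAlg.mk q2 + StarAlg.mk Q * StarAlg.mk W)
        * (StarAlg.mk q2 + StarAlg.mk Q * StarAlg.mk W)
        = StarAlg.mk q2 * StarAlg.mk q2
          + StarAlg.mk q2 * (StarAlg.mk Q * StarAlg.mk W)
          + (StarAlg.mk Q * StarAlg.mk W) * StarAlg.mk q2
          + (StarAlg.mk Q * StarAlg.mk W) * (StarAlg.mk Q * StarAlg.mk W) := by noncomm_ring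
    rw [expand, hQWQW, hq2l (StarAlg.mk q2), hq2l (StarAlg.mk Q * StarAlg.mk W),
      hq2r (StarAlg.mk Q * StarAlg.mk W), hq21]
    module
  have hP0 : PowerSeries.coeff 0 (q2 + mult Q W) = P₀ := by
    rw [map_add, hdeform, hW0, mul_one, hQdef, map_sub, hq2def,
      PowerSeries.coeff_zero_C, PowerSeries.coeff_zero_C]
    abel
  refine ⟨hidem0, W, ⟨hW0, hWWU⟩, huniq, ?_, ?_, ?_⟩
  · intro n
    rw [hWdef, PowerSeries.coeff_mk, hSsumdef]
  · exact congrArg StarAlg.toPS hPP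
  · exact hP0
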